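/- Nonvanishing of ∂h/∂x on the cone (Lemma 2.17): let τ ≥ 3 be an integer, let c₃,…,c_τ be real numbers, and define h : ℝ² → ℝ by h(x,y) = x^τ − x^{τ−2}y² + Σ_{k=3}^{τ} c_k·x^{τ−k}·y^k. Let H be the connected component containing (1,0) of the set {p ∈ ℝ² : h(p) = 1 and det(Hess h)(p) < 0}. Then the partial derivative ∂h/∂x does not vanish at any point of the cone ℝ_{>0}·H. -/

import Mathlib

noncomputable section

/-- Determinant of the Hessian matrix of `f : ℝ² → ℝ` at `p`. -/
def hessDet2 (f : (Fin 2 → ℝ) → ℝ) (p : Fin 2 → ℝ) : ℝ :=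
  Matrix.det (Matrix.of fun i j : Fin 2 =>
    iteratedFDeriv ℝ 2 f p ![Pi.single i 1, Pi.single j 1])

namespace L217

open Real Set

/-- first basis vector -/
def E0 : Fin 2 → ℝ := ![1, 0]
/-- second basis vector -/
def E1 : Fin 2 → ℝ := ![0, 1]

lemma single0 : (Pi.single 0 1 : Fin 2 → ℝ) = E0 := by
  funext i; fin_cases i <;> simp [E0]

lemma single1 : (Pi.single 1 1 : Fin 2 → ℝ) = E1 := by
  funext i; fin_cases i <;> simp [E1]

/-- unit vector at angle θ -/
def uu (θ : ℝ) : Fin 2 → ℝ := Real.cos θ • E0 + Real.sin θ • E1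
/-- its rotate by π/2 -/
def ww (θ : ℝ) : Fin 2 → ℝ := (-Real.sin θ) • E0 + Real.cos θ • E1

lemma uu_apply (θ : ℝ) : uu θ = ![Real.cos θ, Real.sin θ] := by
  funext i; fin_cases i <;> simp [uu, E0, E1]

lemma uu_zero : uu 0 = ![1, 0] := by simp [uu_apply]

lemma ww_zero : ww 0 = E1 := by simp [ww]

lemma hasDerivAt_uu (θ : ℝ) : HasDerivAt uu (ww θ) θ := by
  have h1 := ((Real.hasDerivAt_cos θ).smul_const E0).add
    ((Real.hasDerivAt_sin θ).smul_const E1)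
  have e : uu = (fun y => Real.cos y • E0) + fun y => Real.sin y • E1 := by funext y; simp [uu]
  rw [e]
  simpa [uu, ww] using h1

lemma hasDerivAt_ww (θ : ℝ) : HasDerivAt ww (-uu θ) θ := by
  have h1 := (((Real.hasDerivAt_sin θ).neg).smul_const E0).add
    ((Real.hasDerivAt_cos θ).smul_const E1)
  have e1 : ww = (fun x => -(Real.sin x • E0)) + fun x => Real.cos x • E1 := by
    funext x; simp [ww]
  have e2 : HasDerivAt ww (-(Real.cos θ) • E0 + (-Real.sin θ) • E1) θ := by
    rw [e1]; simpa using h1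
  have e3 : -(Real.cos θ) • E0 + (-Real.sin θ) • E1 = -uu θ := by
    simp [uu]; module
  rwa [e3] at e2

lemma E0_decomp (θ : ℝ) : E0 = Real.cos θ • uu θ - Real.sin θ • ww θ := by
  funext i
  have hs := Real.sin_sq_add_cos_sq θ
  fin_cases i <;> simp [uu, ww, E0, E1] <;> nlinarith [hs]

lemma E1_decomp (θ : ℝ) : E1 = Real.sin θ • uu θ + Real.cos θ • ww θ := by
  funext i
  have hs := Real.sin_sq_add_cos_sq θ
  fin_cases i <;> simp [uu, ww, E0, E1] <;> nlinarith [hs]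


lemma polar_rep (p : Fin 2 → ℝ) (hp : p ≠ 0) (cc : ℝ) :
    ∃ r : ℝ, 0 < r ∧ ∃ θ ∈ Set.Ico cc (cc + 2*Real.pi), p = r • uu θ := by
  set z : ℂ := ⟨p 0, p 1⟩ with hz
  have hz0 : z ≠ 0 := by
    intro hzz
    apply hp
    have h0 : p 0 = 0 := congrArg Complex.re hzz
    have h1 : p 1 = 0 := congrArg Complex.im hzz
    funext i; fin_cases i <;> simp [h0, h1]
  have hr : 0 < ‖z‖ := norm_pos_iff.mpr hz0
  set θ₀ := Complex.arg z with hθ₀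
  have hc0 : ‖z‖ * Real.cos θ₀ = p 0 := Complex.norm_mul_cos_arg z
  have hs0 : ‖z‖ * Real.sin θ₀ = p 1 := Complex.norm_mul_sin_arg z
  set θ := toIcoMod Real.two_pi_pos cc θ₀ with hθ
  have hmem : θ ∈ Set.Ico cc (cc + 2*Real.pi) := toIcoMod_mem_Ico _ cc θ₀
  have hdiff : θ₀ - θ = toIcoDiv Real.two_pi_pos cc θ₀ • (2*Real.pi) :=
    self_sub_toIcoMod _ cc θ₀
  have hθeq : θ = θ₀ + (-(toIcoDiv Real.two_pi_pos cc θ₀) : ℤ) * (2*Real.pi) := by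
    push_cast
    rw [zsmul_eq_mul] at hdiff
    linarith [hdiff]
  have hcos : Real.cos θ = Real.cos θ₀ := by rw [hθeq, Real.cos_add_int_mul_two_pi]
  have hsin : Real.sin θ = Real.sin θ₀ := by rw [hθeq, Real.sin_add_int_mul_two_pi]
  refine ⟨‖z‖, hr, θ, hmem, ?_⟩
  funext i; fin_cases i <;>
    simp [uu_apply, hcos, hsin, hc0, hs0]

lemma cross_uu (s t : ℝ) :
    (uu s) 0 * (uu t) 1 - (uu s) 1 * (uu t) 0 = Real.sin (t - s) := by
  simp [uu_apply]
  rw [Real.sin_sub]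
  ring

lemma sin_neg_of_neg_of_neg_pi_lt' {x : ℝ} (h1 : -Real.pi < x) (h2 : x < 0) :
    Real.sin x < 0 := by
  have := Real.sin_pos_of_pos_of_lt_pi (x := -x) (by linarith) (by linarith)
  rw [Real.sin_neg] at this
  linarith

section withh

variable {τ : ℕ} {c : ℕ → ℝ} {h : (Fin 2 → ℝ) → ℝ}

/-! ### Basic facts from the explicit formula -/

lemma smooth_h (hτ : 3 ≤ τ)
    (hdef : h = fun v => v 0 ^ τ - v 0 ^ (τ - 2) * v 1 ^ 2 +
      ∑ k ∈ Finset.Icc 3 τ, c k * v 0 ^ (τ - k) * v 1 ^ k) :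
    ContDiff ℝ 2 h := by
  have h0 : ContDiff ℝ 2 (fun v : Fin 2 → ℝ => v 0) :=
    (ContinuousLinearMap.proj 0 : (Fin 2 → ℝ) →L[ℝ] ℝ).contDiff
  have h1 : ContDiff ℝ 2 (fun v : Fin 2 → ℝ => v 1) :=
    (ContinuousLinearMap.proj 1 : (Fin 2 → ℝ) →L[ℝ] ℝ).contDiff
  rw [hdef]
  exact (((h0.pow τ).sub ((h0.pow (τ-2)).mul (h1.pow 2))).add
    (ContDiff.sum fun k _ => (contDiff_const.mul (h0.pow (τ-k))).mul (h1.pow k)))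

lemma hom_h (hτ : 3 ≤ τ)
    (hdef : h = fun v => v 0 ^ τ - v 0 ^ (τ - 2) * v 1 ^ 2 +
      ∑ k ∈ Finset.Icc 3 τ, c k * v 0 ^ (τ - k) * v 1 ^ k) :
    ∀ (l : ℝ) (v : Fin 2 → ℝ), h (l • v) = l ^ τ * h v := by
  intro l v
  have e2 : l ^ (τ - 2) * l ^ 2 = l ^ τ := by
    rw [← pow_add]; congr 1; omega
  have e3 : ∀ k ∈ Finset.Icc 3 τ,
      c k * (l • v) 0 ^ (τ - k) * (l • v) 1 ^ k = l ^ τ * (c k * v 0 ^ (τ - k) * v 1 ^ k) := by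
    intro k hk
    have hk' : k ≤ τ := (Finset.mem_Icc.1 hk).2
    have e4 : l ^ (τ - k) * l ^ k = l ^ τ := by rw [← pow_add]; congr 1; omega
    simp only [Pi.smul_apply, smul_eq_mul, mul_pow]
    rw [← e4]; ring
  simp only [hdef]
  rw [Finset.sum_congr rfl e3, ← Finset.mul_sum]
  simp only [Pi.smul_apply, smul_eq_mul, mul_pow]
  rw [← e2]; ring

lemma h_base (hτ : 3 ≤ τ)
    (hdef : h = fun v => v 0 ^ τ - v 0 ^ (τ - 2) * v 1 ^ 2 +
      ∑ k ∈ Finset.Icc 3 τ, c k * v 0 ^ (τ - k) * v 1 ^ k) :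
    h ![1, 0] = 1 := by
  subst hdef
  simp only [Matrix.cons_val_zero, Matrix.cons_val_one, Matrix.head_cons, one_pow]
  rw [Finset.sum_eq_zero, add_zero]
  · norm_num
  · intro k hk
    have : 3 ≤ k := (Finset.mem_Icc.1 hk).1
    rw [zero_pow (by omega)]; ring

lemma h_zero (hτ : 3 ≤ τ)
    (hdef : h = fun v => v 0 ^ τ - v 0 ^ (τ - 2) * v 1 ^ 2 +
      ∑ k ∈ Finset.Icc 3 τ, c k * v 0 ^ (τ - k) * v 1 ^ k) :
    h 0 = 0 := by
  subst hdef
  simp only [Pi.zero_apply]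
  rw [zero_pow (by omega), zero_pow (by omega : (2:ℕ) ≠ 0), Finset.sum_eq_zero]
  · ring
  · intro k hk
    have : (0:ℝ) ^ k = 0 := zero_pow (by have := (Finset.mem_Icc.1 hk).1; omega)
    rw [this]; ring

lemma dy_base (hτ : 3 ≤ τ) (hsm : ContDiff ℝ 2 h)
    (hdef : h = fun v => v 0 ^ τ - v 0 ^ (τ - 2) * v 1 ^ 2 +
      ∑ k ∈ Finset.Icc 3 τ, c k * v 0 ^ (τ - k) * v 1 ^ k) :
    fderiv ℝ h ![1, 0] E1 = 0 ∧ fderiv ℝ (fderiv ℝ h) ![1, 0] E1 E1 = -2 := by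
  have hd1 : ∀ p, HasFDerivAt h (fderiv ℝ h p) p :=
    fun p => ((hsm.differentiable two_ne_zero) p).hasFDerivAt
  have hd2 : ∀ p, HasFDerivAt (fderiv ℝ h) (fderiv ℝ (fderiv ℝ h) p) p := by
    have : ContDiff ℝ 1 (fderiv ℝ h) := hsm.fderiv_right (le_refl _)
    exact fun p => ((this.differentiable one_ne_zero) p).hasFDerivAt
  have hγ : ∀ t : ℝ, (![1, 0] + t • E1 : Fin 2 → ℝ) = ![1, t] := by
    intro t; funext i; fin_cases i <;> simp [E1]
  have hγd : ∀ t : ℝ, HasDerivAt (fun s : ℝ => (![1, s] : Fin 2 → ℝ)) E1 t := by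
    intro t
    have h1 : HasDerivAt (fun s : ℝ => (![1, 0] + s • E1 : Fin 2 → ℝ)) ((1:ℝ) • E1) t :=
      ((hasDerivAt_id t).smul_const E1).const_add _
    simp only [one_smul] at h1
    rw [show (fun s : ℝ => (![1,0] + s • E1 : Fin 2 → ℝ)) = fun s => ![1,s] from funext hγ] at h1
    exact h1
  -- first derivative explicit
  have hψ : ∀ t : ℝ, h ![1, t] = 1 - t ^ 2 + ∑ k ∈ Finset.Icc 3 τ, c k * t ^ k := by
    intro t; simp [hdef]
  have hder1 : ∀ t : ℝ, HasDerivAt (fun s : ℝ => h ![1, s]) (fderiv ℝ h ![1, t] E1) t :=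
    fun t => (hd1 ![1, t]).comp_hasDerivAt t (hγd t)
  have hder1' : ∀ t : ℝ, HasDerivAt (fun s : ℝ => h ![1, s])
      (-(2 * t) + ∑ k ∈ Finset.Icc 3 τ, c k * (k * t ^ (k - 1))) t := by
    intro t
    have hsum : HasDerivAt (fun s : ℝ => ∑ k ∈ Finset.Icc 3 τ, c k * s ^ k)
        (∑ k ∈ Finset.Icc 3 τ, c k * (k * t ^ (k - 1))) t :=
      HasDerivAt.fun_sum fun k _ => (hasDerivAt_pow k t).const_mul (c k)
    have hq : HasDerivAt (fun s : ℝ => 1 - s ^ 2 + ∑ k ∈ Finset.Icc 3 τ, c k * s ^ k)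
        (-(2 * t) + ∑ k ∈ Finset.Icc 3 τ, c k * (k * t ^ (k - 1))) t := by
      have h2 : HasDerivAt (fun s : ℝ => 1 - s ^ 2) (-(2 * t)) t := by
        simpa using (hasDerivAt_pow 2 t).const_sub 1
      exact h2.add hsum
    simpa [funext hψ] using hq
  have hfd1 : ∀ t : ℝ, fderiv ℝ h ![1, t] E1
      = -(2 * t) + ∑ k ∈ Finset.Icc 3 τ, c k * (k * t ^ (k - 1)) :=
    fun t => (hder1 t).unique (hder1' t)
  constructor
  · rw [hfd1 0]
    rw [Finset.sum_eq_zero]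
    · ring
    · intro k hk
      have : 3 ≤ k := (Finset.mem_Icc.1 hk).1
      rw [zero_pow (by omega : k - 1 ≠ 0)]; ring
  · -- second derivative
    have hder2 : ∀ t : ℝ, HasDerivAt (fun s : ℝ => fderiv ℝ h ![1, s] E1)
        (fderiv ℝ (fderiv ℝ h) ![1, t] E1 E1) t := by
      intro t
      have hc0 : HasDerivAt (fun s : ℝ => fderiv ℝ h ![1, s])
          (fderiv ℝ (fderiv ℝ h) ![1, t] E1) t :=
        (hd2 ![1, t]).comp_hasDerivAt t (hγd t)
      have := hc0.clm_apply (hasDerivAt_const t E1)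
      simpa using this
    have hder2' : HasDerivAt (fun s : ℝ => fderiv ℝ h ![1, s]  E1) (-2 : ℝ) 0 := by
      have hq : HasDerivAt (fun s : ℝ =>
          -(2 * s) + ∑ k ∈ Finset.Icc 3 τ, c k * (k * s ^ (k - 1)))
          (-2 + ∑ k ∈ Finset.Icc 3 τ, (c k * k) * (((k - 1 : ℕ) : ℝ) * (0:ℝ) ^ (k - 2))) 0 := by
        have h2 : HasDerivAt (fun s : ℝ => -(2 * s)) (-2 : ℝ) 0 := by
          exact (((hasDerivAt_id (0:ℝ)).const_mul (2:ℝ)).neg).congr_deriv (by norm_num)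
        have hsum : HasDerivAt (fun s : ℝ => ∑ k ∈ Finset.Icc 3 τ, c k * (k * s ^ (k - 1)))
            (∑ k ∈ Finset.Icc 3 τ, (c k * k) * (((k - 1 : ℕ) : ℝ) * (0:ℝ) ^ (k - 2))) 0 := by
          apply HasDerivAt.fun_sum
          intro k hk
          have h3 : HasDerivAt (fun s : ℝ => (c k * k) * s ^ (k - 1))
              ((c k * k) * (((k - 1 : ℕ) : ℝ) * (0:ℝ) ^ (k - 1 - 1))) 0 :=
            (hasDerivAt_pow (k - 1) (0:ℝ)).const_mul _
          have hk3 : 3 ≤ k := (Finset.mem_Icc.1 hk).1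
          have he : k - 1 - 1 = k - 2 := by omega
          rw [he] at h3
          have hfun : (fun s : ℝ => c k * ((k:ℝ) * s ^ (k - 1)))
              = fun s : ℝ => (c k * k) * s ^ (k - 1) := by funext s; ring
          rw [hfun]
          exact h3
        exact h2.add hsum
      have hz : (∑ k ∈ Finset.Icc 3 τ, (c k * k) * (((k - 1 : ℕ) : ℝ) * (0:ℝ) ^ (k - 2))) = 0 := by
        apply Finset.sum_eq_zero
        intro k hk
        have : 3 ≤ k := (Finset.mem_Icc.1 hk).1
        rw [zero_pow (by omega : k - 2 ≠ 0)]; ring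
      rw [hz, add_zero] at hq
      have : (fun s : ℝ => -(2 * s) + ∑ k ∈ Finset.Icc 3 τ, c k * (k * s ^ (k - 1)))
          = fun s : ℝ => fderiv ℝ h ![1, s] E1 := by
        funext s; rw [hfd1 s]
      rwa [this] at hq
    have := (hder2 0).unique hder2'
    exact this


/-! ### Generic facts about smooth homogeneous functions -/

variable (hsm : ContDiff ℝ 2 h) (hom : ∀ (l : ℝ) (v : Fin 2 → ℝ), h (l • v) = l ^ τ * h v)

include hsm

lemma hd1 (p : Fin 2 → ℝ) : HasFDerivAt h (fderiv ℝ h p) p :=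
  ((hsm.differentiable two_ne_zero) p).hasFDerivAt

lemma hd2 (p : Fin 2 → ℝ) :
    HasFDerivAt (fderiv ℝ h) (fderiv ℝ (fderiv ℝ h) p) p := by
  have : ContDiff ℝ 1 (fderiv ℝ h) := hsm.fderiv_right (le_refl _)
  exact ((this.differentiable one_ne_zero) p).hasFDerivAt

lemma symm2 (p v w : Fin 2 → ℝ) :
    fderiv ℝ (fderiv ℝ h) p v w = fderiv ℝ (fderiv ℝ h) p w v :=
  second_derivative_symmetric (fun y => hd1 hsm y) (hd2 hsm p) v w

lemma cont_d2 : Continuous (fderiv ℝ (fderiv ℝ h)) := by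
  have h1 : ContDiff ℝ 1 (fderiv ℝ h) := hsm.fderiv_right (le_refl _)
  have h0 : ContDiff ℝ 0 (fderiv ℝ (fderiv ℝ h)) := h1.fderiv_right (by norm_num)
  exact h0.continuous

include hom

lemma euler1 (hτ : 1 ≤ τ) (p : Fin 2 → ℝ) : fderiv ℝ h p p = τ * h p := by
  have hline : HasDerivAt (fun l : ℝ => l • p) p 1 := by
    simpa using (hasDerivAt_id (1:ℝ)).smul_const p
  have hc : HasDerivAt (fun l : ℝ => h (l • p)) (fderiv ℝ h ((1:ℝ) • p) p) 1 :=
    (hd1 hsm ((1:ℝ) • p)).comp_hasDerivAt 1 hline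
  rw [one_smul] at hc
  have hc2 : HasDerivAt (fun l : ℝ => l ^ τ * h p) ((τ:ℝ) * h p) 1 := by
    simpa using (hasDerivAt_pow τ (1:ℝ)).mul_const (h p)
  have he : (fun l : ℝ => h (l • p)) = fun l => l ^ τ * h p := funext fun l => hom l p
  rw [he] at hc
  exact hc.unique hc2


lemma fderiv_hom (hτ : 1 ≤ τ) {l : ℝ} (hl : l ≠ 0) (p w : Fin 2 → ℝ) :
    fderiv ℝ h (l • p) w = l ^ (τ - 1) * fderiv ℝ h p w := by
  have hA : HasFDerivAt (fun v : Fin 2 → ℝ => l • v)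
      (l • ContinuousLinearMap.id ℝ (Fin 2 → ℝ)) p := by
    exact (l • ContinuousLinearMap.id ℝ (Fin 2 → ℝ)).hasFDerivAt
  have h1 : HasFDerivAt (fun v : Fin 2 → ℝ => h (l • v))
      ((fderiv ℝ h (l • p)).comp (l • ContinuousLinearMap.id ℝ (Fin 2 → ℝ))) p :=
    (hd1 hsm (l • p)).comp p hA
  have h2 : HasFDerivAt (fun v : Fin 2 → ℝ => l ^ τ * h v) (l ^ τ • fderiv ℝ h p) p :=
    (hd1 hsm p).const_mul (l ^ τ)
  have he : (fun v : Fin 2 → ℝ => h (l • v)) = fun v => l ^ τ * h v := funext fun v => hom l v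
  rw [he] at h1
  have := h1.unique h2
  have happ := congrArg (fun (T : (Fin 2 → ℝ) →L[ℝ] ℝ) => T w) this
  simp only [ContinuousLinearMap.coe_comp', Function.comp_apply,
    ContinuousLinearMap.smul_apply, ContinuousLinearMap.coe_smul',
    Pi.smul_apply, ContinuousLinearMap.coe_id', id_eq, smul_eq_mul] at happ
  have hm : (fderiv ℝ h (l • p)) (l • w) = l * fderiv ℝ h (l • p) w := by
    rw [map_smul]; simp
  rw [hm] at happ
  have hlp : l ^ τ = l * l ^ (τ - 1) := by
    rw [← pow_succ']; congr 1; omega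
  rw [hlp] at happ
  exact mul_left_cancel₀ hl (by linear_combination happ)


lemma euler2 (hτ : 2 ≤ τ) (p w : Fin 2 → ℝ) :
    fderiv ℝ (fderiv ℝ h) p p w = (τ - 1 : ℝ) * fderiv ℝ h p w := by
  have hline : HasDerivAt (fun l : ℝ => l • p) p 1 := by
    simpa using (hasDerivAt_id (1:ℝ)).smul_const p
  have hc0 : HasDerivAt (fun l : ℝ => fderiv ℝ h (l • p))
      (fderiv ℝ (fderiv ℝ h) ((1:ℝ) • p) p) 1 :=
    (hd2 hsm ((1:ℝ) • p)).comp_hasDerivAt 1 hline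
  rw [one_smul] at hc0
  have hc : HasDerivAt (fun l : ℝ => fderiv ℝ h (l • p) w)
      (fderiv ℝ (fderiv ℝ h) p p w) 1 := by
    have := hc0.clm_apply (hasDerivAt_const 1 w)
    simpa using this
  have hc2 : HasDerivAt (fun l : ℝ => l ^ (τ - 1) * fderiv ℝ h p w)
      ((τ - 1 : ℝ) * fderiv ℝ h p w) 1 := by
    have := (hasDerivAt_pow (τ - 1) (1:ℝ)).mul_const (fderiv ℝ h p w)
    simpa [Nat.cast_sub (by omega : 1 ≤ τ)] using this
  have heq : (fun l : ℝ => fderiv ℝ h (l • p) w) =ᶠ[nhds 1]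
      (fun l : ℝ => l ^ (τ - 1) * fderiv ℝ h p w) := by
    filter_upwards [eventually_ne_nhds (by norm_num : (1:ℝ) ≠ 0)] with l hl
    exact fderiv_hom hsm hom (by omega) hl p w
  exact (hc.congr_of_eventuallyEq heq.symm).unique hc2


lemma fderiv2_hom (hτ : 2 ≤ τ) {l : ℝ} (hl : l ≠ 0) (p v w : Fin 2 → ℝ) :
    fderiv ℝ (fderiv ℝ h) (l • p) v w = l ^ (τ - 2) * fderiv ℝ (fderiv ℝ h) p v w := by
  have hA : HasFDerivAt (fun q : Fin 2 → ℝ => l • q)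
      (l • ContinuousLinearMap.id ℝ (Fin 2 → ℝ)) p :=
    (l • ContinuousLinearMap.id ℝ (Fin 2 → ℝ)).hasFDerivAt
  have h1 : HasFDerivAt (fun q : Fin 2 → ℝ => fderiv ℝ h (l • q))
      ((fderiv ℝ (fderiv ℝ h) (l • p)).comp (l • ContinuousLinearMap.id ℝ (Fin 2 → ℝ))) p :=
    (hd2 hsm (l • p)).comp p hA
  have h1' := h1.clm_apply (hasFDerivAt_const w p)
  have h2 : HasFDerivAt (fun q : Fin 2 → ℝ => fderiv ℝ h q w)
      ((fderiv ℝ (fderiv ℝ h) p).flip w) p := by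
    have := (hd2 hsm p).clm_apply (hasFDerivAt_const w p)
    simpa using this
  have h2' : HasFDerivAt (fun q : Fin 2 → ℝ => l ^ (τ - 1) * fderiv ℝ h q w)
      (l ^ (τ - 1) • (fderiv ℝ (fderiv ℝ h) p).flip w) p := h2.const_mul _
  have he : (fun q : Fin 2 → ℝ => fderiv ℝ h (l • q) w) =
      fun q => l ^ (τ - 1) * fderiv ℝ h q w := funext fun q => fderiv_hom hsm hom (by omega) hl q w
  rw [he] at h1'
  have hu := h1'.unique h2'
  have happ := congrArg (fun (T : (Fin 2 → ℝ) →L[ℝ] ℝ) => T v) hu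
  simp only [ContinuousLinearMap.add_apply, ContinuousLinearMap.coe_comp',
    Function.comp_apply, ContinuousLinearMap.flip_apply,
    ContinuousLinearMap.smul_apply, ContinuousLinearMap.coe_smul', Pi.smul_apply,
    ContinuousLinearMap.coe_id', id_eq, smul_eq_mul,
    ContinuousLinearMap.map_zero, ContinuousLinearMap.zero_apply, add_zero,
    ContinuousLinearMap.comp_zero, zero_add] at happ
  have hm : fderiv ℝ (fderiv ℝ h) (l • p) (l • v) w
      = l * fderiv ℝ (fderiv ℝ h) (l • p) v w := by
    rw [map_smul]; simp
  rw [hm] at happ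
  have hlp : l ^ (τ - 1) = l * l ^ (τ - 2) := by
    rw [← pow_succ']; congr 1; omega
  rw [hlp] at happ
  exact mul_left_cancel₀ hl (by linear_combination happ)


omit hom

lemma hessDet2_eq (p : Fin 2 → ℝ) :
    hessDet2 h p = fderiv ℝ (fderiv ℝ h) p E0 E0 * fderiv ℝ (fderiv ℝ h) p E1 E1 -
      fderiv ℝ (fderiv ℝ h) p E0 E1 * fderiv ℝ (fderiv ℝ h) p E1 E0 := by
  rw [hessDet2, Matrix.det_fin_two]
  simp [Matrix.of_apply, iteratedFDeriv_two_apply, single0, single1]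

include hom

lemma hessDet2_hom (hτ : 2 ≤ τ) {l : ℝ} (hl : l ≠ 0) (p : Fin 2 → ℝ) :
    hessDet2 h (l • p) = (l ^ (τ - 2)) ^ 2 * hessDet2 h p := by
  rw [hessDet2_eq hsm, hessDet2_eq hsm,
    fderiv2_hom hsm hom hτ hl, fderiv2_hom hsm hom hτ hl,
    fderiv2_hom hsm hom hτ hl, fderiv2_hom hsm hom hτ hl]
  ring

end withh

/-! ### Circle functions -/

/-- `φ θ = h(cos θ, sin θ)` -/
def ph (h : (Fin 2 → ℝ) → ℝ) (θ : ℝ) : ℝ := h (uu θ)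
/-- angular derivative of `φ` -/
def ph1 (h : (Fin 2 → ℝ) → ℝ) (θ : ℝ) : ℝ := fderiv ℝ h (uu θ) (ww θ)
/-- second angular Hessian entry -/
def q2 (h : (Fin 2 → ℝ) → ℝ) (θ : ℝ) : ℝ := fderiv ℝ (fderiv ℝ h) (uu θ) (ww θ) (ww θ)
/-- second angular derivative of `φ` -/
def ph2 (τ : ℕ) (h : (Fin 2 → ℝ) → ℝ) (θ : ℝ) : ℝ := q2 h θ - τ * ph h θ
/-- `∂h/∂x` on the circle -/
def ga (h : (Fin 2 → ℝ) → ℝ) (θ : ℝ) : ℝ := fderiv ℝ h (uu θ) E0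

section withh2

variable {τ : ℕ} {h : (Fin 2 → ℝ) → ℝ}
variable (hsm : ContDiff ℝ 2 h) (hom : ∀ (l : ℝ) (v : Fin 2 → ℝ), h (l • v) = l ^ τ * h v)

include hsm

lemma hasDerivAt_ph (θ : ℝ) : HasDerivAt (ph h) (ph1 h θ) θ :=
  (hd1 hsm (uu θ)).comp_hasDerivAt θ (hasDerivAt_uu θ)

omit hsm in
lemma cont_uu : Continuous uu := by
  unfold uu
  exact (Real.continuous_cos.smul continuous_const).add
    (Real.continuous_sin.smul continuous_const)

lemma cont_ph : Continuous (ph h) := (hsm.continuous).comp cont_uu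

include hom

lemma hasDerivAt_ph1 (hτ : 3 ≤ τ) (θ : ℝ) : HasDerivAt (ph1 h) (ph2 τ h θ) θ := by
  have hc0 : HasDerivAt (fun t => fderiv ℝ h (uu t))
      (fderiv ℝ (fderiv ℝ h) (uu θ) (ww θ)) θ :=
    (hd2 hsm (uu θ)).comp_hasDerivAt θ (hasDerivAt_uu θ)
  have hc := hc0.clm_apply (hasDerivAt_ww θ)
  have he : fderiv ℝ h (uu θ) (-uu θ) = -((τ:ℝ) * ph h θ) := by
    rw [map_neg, euler1 hsm hom (by omega) (uu θ)]; rfl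
  have : fderiv ℝ (fderiv ℝ h) (uu θ) (ww θ) (ww θ) + fderiv ℝ h (uu θ) (-uu θ)
      = ph2 τ h θ := by rw [he, ph2, q2]; ring
  rw [this] at hc
  exact hc

lemma ga_eq (hτ : 3 ≤ τ) (θ : ℝ) :
    ga h θ = (τ:ℝ) * ph h θ * Real.cos θ - ph1 h θ * Real.sin θ := by
  rw [ga, E0_decomp θ, map_sub, map_smul, map_smul, smul_eq_mul, smul_eq_mul,
    euler1 hsm hom (by omega) (uu θ)]
  rw [ph, ph1]; ring

lemma hess_uu (hτ : 3 ≤ τ) (θ : ℝ) :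
    hessDet2 h (uu θ) = (τ:ℝ)*((τ:ℝ)-1)*ph h θ * q2 h θ - ((τ:ℝ)-1)^2 * (ph1 h θ)^2 := by
  have hsymm := symm2 hsm (uu θ)
  have hQuu : fderiv ℝ (fderiv ℝ h) (uu θ) (uu θ) (uu θ)
      = ((τ:ℝ)-1)*((τ:ℝ) * ph h θ) := by
    rw [euler2 hsm hom (by omega), euler1 hsm hom (by omega)]; rfl
  have hQuw : fderiv ℝ (fderiv ℝ h) (uu θ) (uu θ) (ww θ) = ((τ:ℝ)-1) * ph1 h θ := by
    rw [euler2 hsm hom (by omega)]; rfl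
  have hQwu : fderiv ℝ (fderiv ℝ h) (uu θ) (ww θ) (uu θ) = ((τ:ℝ)-1) * ph1 h θ := by
    rw [hsymm]; exact hQuw
  have hQww : fderiv ℝ (fderiv ℝ h) (uu θ) (ww θ) (ww θ) = q2 h θ := rfl
  have hcs := Real.sin_sq_add_cos_sq θ
  rw [hessDet2_eq hsm (uu θ)]
  rw [show E0 = Real.cos θ • uu θ - Real.sin θ • ww θ from E0_decomp θ,
      show E1 = Real.sin θ • uu θ + Real.cos θ • ww θ from E1_decomp θ]
  simp only [map_sub, map_smul, map_add, ContinuousLinearMap.sub_apply,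
    ContinuousLinearMap.add_apply, ContinuousLinearMap.coe_smul', Pi.smul_apply,
    ContinuousLinearMap.smul_apply, smul_eq_mul]
  rw [hQuu, hQuw, hQwu, hQww]
  linear_combination (((τ:ℝ)-1)*((τ:ℝ)*ph h θ) * q2 h θ - (((τ:ℝ)-1)*ph1 h θ)^2)
    * (Real.sin θ^2 + Real.cos θ^2 + 1) * hcs

end withh2

/-! ### The angular domain and the main 1-D analysis -/

/-- hyperbolic positive angles -/
def Dset (h : (Fin 2 → ℝ) → ℝ) : Set ℝ := {θ | 0 < ph h θ ∧ hessDet2 h (uu θ) < 0}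
/-- component of `0` -/
def Aset (h : (Fin 2 → ℝ) → ℝ) : Set ℝ := connectedComponentIn (Dset h) 0

/-- `f = φ^{1/τ}` -/
def ff (τ : ℕ) (h : (Fin 2 → ℝ) → ℝ) (θ : ℝ) : ℝ := ph h θ ^ ((τ:ℝ)⁻¹)
def ff1 (τ : ℕ) (h : (Fin 2 → ℝ) → ℝ) (θ : ℝ) : ℝ :=
  (τ:ℝ)⁻¹ * (ph h θ ^ ((τ:ℝ)⁻¹ - 1) * ph1 h θ)
def ff2 (τ : ℕ) (h : (Fin 2 → ℝ) → ℝ) (θ : ℝ) : ℝ :=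
  (τ:ℝ)⁻¹ * ((((τ:ℝ)⁻¹ - 1) * ph h θ ^ ((τ:ℝ)⁻¹ - 2) * ph1 h θ) * ph1 h θ
    + ph h θ ^ ((τ:ℝ)⁻¹ - 1) * ph2 τ h θ)
def gg (τ : ℕ) (h : (Fin 2 → ℝ) → ℝ) (θ : ℝ) : ℝ :=
  ff τ h θ * Real.cos θ - ff1 τ h θ * Real.sin θ

section withh3

variable {τ : ℕ} {h : (Fin 2 → ℝ) → ℝ}
variable (hτ : 3 ≤ τ) (hsm : ContDiff ℝ 2 h)
  (hom : ∀ (l : ℝ) (v : Fin 2 → ℝ), h (l • v) = l ^ τ * h v)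

omit hτ hsm hom in
lemma cont_ww : Continuous ww := by
  unfold ww
  exact ((Real.continuous_sin.neg).smul continuous_const).add
    (Real.continuous_cos.smul continuous_const)

include hsm

lemma cont_ph1 : Continuous (ph1 h) := by
  have hc1 : ContDiff ℝ 1 (fderiv ℝ h) := hsm.fderiv_right (le_refl _)
  have hc : Continuous (fderiv ℝ h) := hc1.continuous
  exact (hc.comp cont_uu).clm_apply cont_ww

lemma cont_q2 : Continuous (q2 h) := by
  have hc := cont_d2 hsm
  exact ((hc.comp cont_uu).clm_apply cont_ww).clm_apply cont_ww

include hom hτ in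
lemma cont_dd : Continuous (fun θ => hessDet2 h (uu θ)) := by
  have he : (fun θ => hessDet2 h (uu θ))
      = fun θ => (τ:ℝ)*((τ:ℝ)-1)*ph h θ * q2 h θ - ((τ:ℝ)-1)^2 * (ph1 h θ)^2 :=
    funext fun θ => hess_uu hsm hom hτ θ
  rw [he]
  have h1 := cont_ph hsm
  have h2 := cont_ph1 hsm
  have h3 := cont_q2 hsm
  fun_prop

include hom hτ in
lemma open_D : IsOpen (Dset h) := by
  have : Dset h = {θ | 0 < ph h θ} ∩ {θ | hessDet2 h (uu θ) < 0} := rfl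
  rw [this]
  exact (isOpen_lt continuous_const (cont_ph hsm)).inter
    (isOpen_lt (cont_dd hτ hsm hom) continuous_const)

omit hτ hsm hom in
lemma A_sub_D : Aset h ⊆ Dset h := connectedComponentIn_subset _ _

include hom hτ in
lemma open_A : IsOpen (Aset h) := (open_D hτ hsm hom).connectedComponentIn

omit hτ hsm hom in
lemma A_ordConn : Set.OrdConnected (Aset h) :=
  isPreconnected_connectedComponentIn.ordConnected

omit hτ hsm hom in
lemma closure_A_mem {θ : ℝ} (hcl : θ ∈ closure (Aset h)) (hD : θ ∈ Dset h) :
    θ ∈ Aset h := by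
  by_cases h0 : (0:ℝ) ∈ Dset h
  · have hA : IsPreconnected (insert θ (Aset h)) := by
      apply IsPreconnected.subset_closure (s := Aset h)
        isPreconnected_connectedComponentIn
      · exact Set.subset_insert _ _
      · exact Set.insert_subset hcl subset_closure
    have hsub : insert θ (Aset h) ⊆ Dset h :=
      Set.insert_subset hD (A_sub_D)
    have h0A : (0:ℝ) ∈ insert θ (Aset h) :=
      Set.mem_insert_of_mem _ (mem_connectedComponentIn h0)
    exact hA.subset_connectedComponentIn h0A hsub (Set.mem_insert θ _)
  · exfalso
    have : Aset h = ∅ := connectedComponentIn_eq_empty h0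
    rw [this] at hcl
    simp at hcl

/-! ### Derivatives of `f` and `g` -/

lemma hasDerivAt_ff {θ : ℝ} (hφ : 0 < ph h θ) :
    HasDerivAt (ff τ h) (ff1 τ h θ) θ := by
  have h1 := (Real.hasDerivAt_rpow_const (x := ph h θ) (p := (τ:ℝ)⁻¹)
    (Or.inl hφ.ne')).comp θ (hasDerivAt_ph hsm θ)
  have : ((τ:ℝ)⁻¹ * ph h θ ^ ((τ:ℝ)⁻¹ - 1)) * ph1 h θ = ff1 τ h θ := by
    rw [ff1]; ring
  rw [← this]
  exact h1

include hτ hom in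
lemma hasDerivAt_ff1 {θ : ℝ} (hφ : 0 < ph h θ) :
    HasDerivAt (ff1 τ h) (ff2 τ h θ) θ := by
  have h1 := (Real.hasDerivAt_rpow_const (x := ph h θ) (p := (τ:ℝ)⁻¹ - 1)
    (Or.inl hφ.ne')).comp θ (hasDerivAt_ph hsm θ)
  have he : (τ:ℝ)⁻¹ - 1 - 1 = (τ:ℝ)⁻¹ - 2 := by ring
  rw [he] at h1
  have h2 := (h1.mul (hasDerivAt_ph1 hsm hom hτ θ)).const_mul ((τ:ℝ)⁻¹)
  have : (τ:ℝ)⁻¹ * ((((τ:ℝ)⁻¹ - 1) * ph h θ ^ ((τ:ℝ)⁻¹ - 2) * ph1 h θ) * ph1 h θ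
      + ph h θ ^ ((τ:ℝ)⁻¹ - 1) * ph2 τ h θ) = ff2 τ h θ := rfl
  rw [← this]
  convert h2 using 1
  all_goals rfl

include hτ hom in
lemma key_ineq {θ : ℝ} (hθ : θ ∈ Dset h) : ff2 τ h θ + ff τ h θ < 0 := by
  obtain ⟨hφ, hdd⟩ := hθ
  have hτ3 : (3:ℝ) ≤ τ := by exact_mod_cast hτ
  have ht0 : (τ:ℝ) ≠ 0 := by linarith
  have hq2 : q2 h θ = ph2 τ h θ + (τ:ℝ) * ph h θ := by rw [ph2]; ring
  have hrpos : (0:ℝ) < ph h θ ^ ((τ:ℝ)⁻¹ - 2) := Real.rpow_pos_of_pos hφ _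
  have e1 : ph h θ ^ ((τ:ℝ)⁻¹ - 1) = ph h θ ^ ((τ:ℝ)⁻¹ - 2) * ph h θ := by
    rw [show (τ:ℝ)⁻¹ - 1 = ((τ:ℝ)⁻¹ - 2) + 1 by ring, Real.rpow_add hφ, Real.rpow_one]
  have e2 : ph h θ ^ ((τ:ℝ)⁻¹) = ph h θ ^ ((τ:ℝ)⁻¹ - 2) * (ph h θ * ph h θ) := by
    rw [show (τ:ℝ)⁻¹ = ((τ:ℝ)⁻¹ - 2) + 2 by ring, Real.rpow_add hφ,
      show (2:ℝ) = ((2:ℕ):ℝ) by norm_num, Real.rpow_natCast]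
    ring
  set T : ℝ := (τ:ℝ)⁻¹ * (((τ:ℝ)⁻¹ - 1) * (ph1 h θ * ph1 h θ))
      + (τ:ℝ)⁻¹ * (ph h θ * ph2 τ h θ) + ph h θ * ph h θ with hTdef
  have hT : ((τ:ℝ)^2 * ((τ:ℝ) - 1)) * T = hessDet2 h (uu θ) := by
    rw [hess_uu hsm hom hτ θ, hq2, hTdef]
    field_simp
    ring
  have hcoef : (0:ℝ) < (τ:ℝ)^2 * ((τ:ℝ) - 1) := by nlinarith
  have hTneg : T < 0 := by nlinarith [hT, hdd, hcoef]
  have hfact : ff2 τ h θ + ff τ h θ = ph h θ ^ ((τ:ℝ)⁻¹ - 2) * T := by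
    rw [ff2, ff, e1, e2, hTdef]
    ring
  rw [hfact]
  exact mul_neg_of_pos_of_neg hrpos hTneg

include hτ hom in
lemma hasDerivAt_gg {θ : ℝ} (hφ : 0 < ph h θ) :
    HasDerivAt (gg τ h) (-(ff2 τ h θ + ff τ h θ) * Real.sin θ) θ := by
  have h1 := ((hasDerivAt_ff (τ := τ) hsm hφ).mul (Real.hasDerivAt_cos θ)).sub
    ((hasDerivAt_ff1 hτ hsm hom hφ).mul (Real.hasDerivAt_sin θ))
  have : ff1 τ h θ * Real.cos θ + ff τ h θ * -Real.sin θ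
      - (ff2 τ h θ * Real.sin θ + ff1 τ h θ * Real.cos θ)
      = -(ff2 τ h θ + ff τ h θ) * Real.sin θ := by ring
  rw [this] at h1
  exact h1

end withh3

section sturm

variable {τ : ℕ} {h : (Fin 2 → ℝ) → ℝ}
variable (hτ : 3 ≤ τ) (hsm : ContDiff ℝ 2 h)
  (hom : ∀ (l : ℝ) (v : Fin 2 → ℝ), h (l • v) = l ^ τ * h v)

include hτ hsm hom

/-- Sturm comparison: the conditions `φ > 0`, `f'' + f < 0` cannot hold on an
interval of length `π`. -/
lemma sturm (cc : ℝ) : ¬ (Set.Icc cc (cc + Real.pi) ⊆ Aset h) := by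
  intro hsub
  have hsubD : Set.Icc cc (cc + Real.pi) ⊆ Dset h := fun x hx => A_sub_D (hsub hx)
  set W : ℝ → ℝ := fun θ => ff1 τ h θ * Real.sin (θ - cc) - ff τ h θ * Real.cos (θ - cc)
    with hW
  have hWd : ∀ θ ∈ Dset h,
      HasDerivAt W ((ff2 τ h θ + ff τ h θ) * Real.sin (θ - cc)) θ := by
    intro θ hθ
    have hsc : HasDerivAt (fun x : ℝ => Real.sin (x - cc)) (Real.cos (θ - cc)) θ := by
      simpa [Function.comp_def] using (Real.hasDerivAt_sin (θ - cc)).comp θ ((hasDerivAt_id θ).sub_const cc)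
    have hcc : HasDerivAt (fun x : ℝ => Real.cos (x - cc)) (-Real.sin (θ - cc)) θ := by
      simpa [Function.comp_def] using (Real.hasDerivAt_cos (θ - cc)).comp θ ((hasDerivAt_id θ).sub_const cc)
    have h1 := ((hasDerivAt_ff1 hτ hsm hom hθ.1).mul hsc).sub
      ((hasDerivAt_ff (τ := τ) hsm hθ.1).mul hcc)
    have : ff2 τ h θ * Real.sin (θ - cc) + ff1 τ h θ * Real.cos (θ - cc)
        - (ff1 τ h θ * Real.cos (θ - cc) + ff τ h θ * -Real.sin (θ - cc))
        = (ff2 τ h θ + ff τ h θ) * Real.sin (θ - cc) := by ring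
    rw [this] at h1
    exact h1
  have hcont : ContinuousOn W (Set.Icc cc (cc + Real.pi)) := fun x hx =>
    ((hWd x (hsubD hx)).differentiableAt.continuousAt).continuousWithinAt
  have hderiv : ∀ x ∈ interior (Set.Icc cc (cc + Real.pi)), deriv W x < 0 := by
    intro x hx
    rw [interior_Icc] at hx
    rw [(hWd x (hsubD (Set.mem_Icc_of_Ioo hx))).deriv]
    have hsin : 0 < Real.sin (x - cc) :=
      Real.sin_pos_of_pos_of_lt_pi (by linarith [hx.1]) (by linarith [hx.2])
    exact mul_neg_of_neg_of_pos (key_ineq hτ hsm hom (hsubD (Set.mem_Icc_of_Ioo hx))) hsin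
  have hanti : StrictAntiOn W (Set.Icc cc (cc + Real.pi)) :=
    strictAntiOn_of_deriv_neg (convex_Icc _ _) hcont hderiv
  have hpi : (0:ℝ) < Real.pi := Real.pi_pos
  have hlt := hanti (Set.left_mem_Icc.2 (by linarith)) (Set.right_mem_Icc.2 (by linarith))
    (by linarith)
  have hWcc : W cc = -ff τ h cc := by simp [hW]
  have hWcp : W (cc + Real.pi) = ff τ h (cc + Real.pi) := by
    simp [hW, Real.sin_pi, Real.cos_pi]
  rw [hWcc, hWcp] at hlt
  have hf1 : 0 < ff τ h cc := Real.rpow_pos_of_pos (hsubD (Set.left_mem_Icc.2 (by linarith))).1 _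
  have hf2 : 0 < ff τ h (cc + Real.pi) :=
    Real.rpow_pos_of_pos (hsubD (Set.right_mem_Icc.2 (by linarith))).1 _
  linarith

lemma A_sub_Ioo (h0 : (0:ℝ) ∈ Dset h) : Aset h ⊆ Set.Ioo (-Real.pi) Real.pi := by
  intro x hx
  have h0A : (0:ℝ) ∈ Aset h := mem_connectedComponentIn h0
  constructor
  · by_contra hc
    push_neg at hc
    have : Set.Icc (-Real.pi) 0 ⊆ Aset h := by
      intro y hy
      exact (A_ordConn).out hx h0A ⟨by linarith [hy.1], hy.2⟩
    have := sturm hτ hsm hom (-Real.pi)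
    rw [neg_add_cancel] at this
    exact this ‹Set.Icc (-Real.pi) 0 ⊆ Aset h›
  · by_contra hc
    push_neg at hc
    have : Set.Icc 0 Real.pi ⊆ Aset h := by
      intro y hy
      exact (A_ordConn).out h0A hx ⟨hy.1, by linarith [hy.2]⟩
    have := sturm hτ hsm hom 0
    rw [zero_add] at this
    exact this ‹Set.Icc 0 Real.pi ⊆ Aset h›

end sturm

section interval

variable {τ : ℕ} {h : (Fin 2 → ℝ) → ℝ}
variable (hτ : 3 ≤ τ) (hsm : ContDiff ℝ 2 h)
  (hom : ∀ (l : ℝ) (v : Fin 2 → ℝ), h (l • v) = l ^ τ * h v)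
  (h0 : (0:ℝ) ∈ Dset h)

include hτ hsm hom h0

lemma A_nonempty : (Aset h).Nonempty := ⟨0, mem_connectedComponentIn h0⟩

lemma A_bddBelow : BddBelow (Aset h) :=
  (bddBelow_Ioo).mono (A_sub_Ioo hτ hsm hom h0)

lemma A_bddAbove : BddAbove (Aset h) :=
  (bddAbove_Ioo (a := -Real.pi) (b := Real.pi)).mono (A_sub_Ioo hτ hsm hom h0)

lemma sInf_not_mem : sInf (Aset h) ∉ Aset h := by
  intro hmem
  obtain ⟨ε, hε, hball⟩ := Metric.isOpen_iff.1 (open_A hτ hsm hom) _ hmem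
  have : sInf (Aset h) - ε / 2 ∈ Aset h := by
    apply hball
    rw [Metric.mem_ball, Real.dist_eq, abs_of_nonpos (by linarith)]
    linarith
  have := csInf_le (A_bddBelow hτ hsm hom h0) this
  linarith

lemma sSup_not_mem : sSup (Aset h) ∉ Aset h := by
  intro hmem
  obtain ⟨ε, hε, hball⟩ := Metric.isOpen_iff.1 (open_A hτ hsm hom) _ hmem
  have : sSup (Aset h) + ε / 2 ∈ Aset h := by
    apply hball
    rw [Metric.mem_ball, Real.dist_eq, abs_of_nonneg (by linarith)]
    linarith
  have := le_csSup (A_bddAbove hτ hsm hom h0) this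
  linarith

lemma A_eq_Ioo : Aset h = Set.Ioo (sInf (Aset h)) (sSup (Aset h)) := by
  apply Set.Subset.antisymm
  · intro x hx
    rcases eq_or_lt_of_le (csInf_le (A_bddBelow hτ hsm hom h0) hx) with he | hlt
    · exact absurd (he ▸ hx) (sInf_not_mem hτ hsm hom h0)
    rcases eq_or_lt_of_le (le_csSup (A_bddAbove hτ hsm hom h0) hx) with he | hlt2
    · exact absurd (he ▸ hx) (sSup_not_mem hτ hsm hom h0)
    exact ⟨hlt, hlt2⟩
  · intro x hx
    obtain ⟨y, hyA, hyx⟩ := exists_lt_of_csInf_lt (A_nonempty hτ hsm hom h0) hx.1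
    obtain ⟨z, hzA, hxz⟩ := exists_lt_of_lt_csSup (A_nonempty hτ hsm hom h0) hx.2
    exact (A_ordConn).out hyA hzA ⟨hyx.le, hxz.le⟩

lemma width_le_pi : sSup (Aset h) - sInf (Aset h) ≤ Real.pi := by
  by_contra hc
  push_neg at hc
  set aa := sInf (Aset h); set bb := sSup (Aset h)
  set cc := aa + (bb - aa - Real.pi) / 2 with hcc
  apply sturm hτ hsm hom cc
  intro x hx
  rw [A_eq_Ioo hτ hsm hom h0]
  constructor
  · have : aa < cc := by rw [hcc]; simp; linarith
    linarith [hx.1]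
  · have : cc + Real.pi < bb := by rw [hcc]; linarith
    linarith [hx.2]

lemma bounds : -Real.pi < sInf (Aset h) ∧ sInf (Aset h) < 0 ∧ 0 < sSup (Aset h)
    ∧ sSup (Aset h) < Real.pi := by
  have h0A : (0:ℝ) ∈ Aset h := mem_connectedComponentIn h0
  have h0I := (A_eq_Ioo hτ hsm hom h0) ▸ h0A
  have hsub := A_sub_Ioo hτ hsm hom h0
  have h1 : -Real.pi ≤ sInf (Aset h) :=
    le_csInf (A_nonempty hτ hsm hom h0) (fun x hx => (hsub hx).1.le)
  have h2 : sSup (Aset h) ≤ Real.pi :=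
    csSup_le (A_nonempty hτ hsm hom h0) (fun x hx => (hsub hx).2.le)
  have hw := width_le_pi hτ hsm hom h0
  exact ⟨by linarith [h0I.1, h0I.2], h0I.1, h0I.2, by linarith [h0I.1, h0I.2]⟩

end interval

section positivity

variable {τ : ℕ} {h : (Fin 2 → ℝ) → ℝ}
variable (hτ : 3 ≤ τ) (hsm : ContDiff ℝ 2 h)
  (hom : ∀ (l : ℝ) (v : Fin 2 → ℝ), h (l • v) = l ^ τ * h v)

include hτ hsm hom

lemma gpos (hb : ph h 0 = 1) : ∀ θ ∈ Aset h, 0 < gg τ h θ := by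
  intro θ hθ
  have h0 : (0:ℝ) ∈ Dset h := connectedComponentIn_nonempty_iff.mp ⟨θ, hθ⟩
  have h0A : (0:ℝ) ∈ Aset h := mem_connectedComponentIn h0
  have hg0 : gg τ h 0 = 1 := by simp [gg, ff, ff1, hb]
  have hsub := A_sub_Ioo hτ hsm hom h0
  have hAD : Aset h ⊆ Dset h := A_sub_D
  rcases lt_trichotomy θ 0 with hlt | heq | hgt
  · have hIcc : Set.Icc θ 0 ⊆ Aset h := (A_ordConn).out hθ h0A
    have hanti : AntitoneOn (gg τ h) (Set.Icc θ 0) := by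
      apply antitoneOn_of_deriv_nonpos (convex_Icc _ _)
      · exact fun x hx => ((hasDerivAt_gg hτ hsm hom
          (hAD (hIcc hx)).1).differentiableAt.continuousAt).continuousWithinAt
      · intro x hx
        rw [interior_Icc] at hx
        exact (hasDerivAt_gg hτ hsm hom
          (hAD (hIcc (Set.mem_Icc_of_Ioo hx))).1).differentiableAt.differentiableWithinAt
      · intro x hx
        rw [interior_Icc] at hx
        rw [(hasDerivAt_gg hτ hsm hom (hAD (hIcc (Set.mem_Icc_of_Ioo hx))).1).deriv]
        have hxA := hIcc (Set.mem_Icc_of_Ioo hx)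
        have hsin : Real.sin x ≤ 0 := by
          have : Real.sin (-x) ≥ 0 := Real.sin_nonneg_of_nonneg_of_le_pi
            (by linarith [hx.2]) (by linarith [(hsub hxA).1])
          rw [Real.sin_neg] at this
          linarith
        have hkey := key_ineq hτ hsm hom (hAD hxA)
        nlinarith
    have := hanti (Set.left_mem_Icc.2 hlt.le) (Set.right_mem_Icc.2 hlt.le) hlt.le
    rw [hg0] at this
    linarith
  · rw [heq, hg0]; norm_num
  · have hIcc : Set.Icc 0 θ ⊆ Aset h := (A_ordConn).out h0A hθ
    have hmono : MonotoneOn (gg τ h) (Set.Icc 0 θ) := by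
      apply monotoneOn_of_deriv_nonneg (convex_Icc _ _)
      · exact fun x hx => ((hasDerivAt_gg hτ hsm hom
          (hAD (hIcc hx)).1).differentiableAt.continuousAt).continuousWithinAt
      · intro x hx
        rw [interior_Icc] at hx
        exact (hasDerivAt_gg hτ hsm hom
          (hAD (hIcc (Set.mem_Icc_of_Ioo hx))).1).differentiableAt.differentiableWithinAt
      · intro x hx
        rw [interior_Icc] at hx
        rw [(hasDerivAt_gg hτ hsm hom (hAD (hIcc (Set.mem_Icc_of_Ioo hx))).1).deriv]
        have hxA := hIcc (Set.mem_Icc_of_Ioo hx)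
        have hsin : 0 ≤ Real.sin x := Real.sin_nonneg_of_nonneg_of_le_pi
          (by linarith [hx.1]) (by linarith [(hsub hxA).2])
        have hkey := key_ineq hτ hsm hom (hAD hxA)
        nlinarith
    have := hmono (Set.left_mem_Icc.2 hgt.le) (Set.right_mem_Icc.2 hgt.le) hgt.le
    rw [hg0] at this
    linarith

lemma ga_pos (hb : ph h 0 = 1) : ∀ θ ∈ Aset h, 0 < ga h θ := by
  intro θ hθ
  have hAD : Aset h ⊆ Dset h := A_sub_D
  have hφ := (hAD hθ).1
  have hgg := gpos hτ hsm hom hb θ hθ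
  have ht0 : (τ:ℝ) ≠ 0 := by
    have : (3:ℝ) ≤ τ := by exact_mod_cast hτ
    linarith
  have ht' : (τ:ℝ)⁻¹ * (τ:ℝ) = 1 := inv_mul_cancel₀ ht0
  have e3 : ph h θ ^ ((τ:ℝ)⁻¹ - 1) * ph h θ = ph h θ ^ ((τ:ℝ)⁻¹) := by
    nth_rewrite 2 [show ph h θ = ph h θ ^ (1:ℝ) from (Real.rpow_one _).symm]
    rw [← Real.rpow_add hφ]
    norm_num
  have hrel : gg τ h θ = ((τ:ℝ)⁻¹ * ph h θ ^ ((τ:ℝ)⁻¹ - 1)) * ga h θ := by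
    rw [gg, ga_eq hsm hom hτ, ff, ff1]
    linear_combination (-(Real.cos θ))*e3
      - (ph h θ ^ ((τ:ℝ)⁻¹-1) * ph h θ * Real.cos θ)*ht'
  have hk : 0 < (τ:ℝ)⁻¹ * ph h θ ^ ((τ:ℝ)⁻¹ - 1) := by
    apply mul_pos
    · have : (3:ℝ) ≤ τ := by exact_mod_cast hτ
      rw [inv_pos]; linarith
    · exact Real.rpow_pos_of_pos hφ _
  nlinarith [hrel, hk, hgg]

end positivity

section final

variable {τ : ℕ} {h : (Fin 2 → ℝ) → ℝ}
variable (hτ : 3 ≤ τ) (hsm : ContDiff ℝ 2 h)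
  (hom : ∀ (l : ℝ) (v : Fin 2 → ℝ), h (l • v) = l ^ τ * h v)
  (hz : h 0 = 0) (hbD : (0:ℝ) ∈ Dset h)

include hτ hsm hom

lemma angle_mem_D {p : Fin 2 → ℝ} (hp1 : h p = 1) (hphess : hessDet2 h p < 0)
    {r θ : ℝ} (hr : 0 < r) (hrep : p = r • uu θ) : θ ∈ Dset h := by
  have h1 : r ^ τ * ph h θ = 1 := by rw [ph, ← hom r (uu θ), ← hrep, hp1]
  have hrp : 0 < r ^ τ := pow_pos hr τ
  have hφ : 0 < ph h θ := by nlinarith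
  have h2 : hessDet2 h p = (r ^ (τ-2))^2 * hessDet2 h (uu θ) := by
    rw [hrep]; exact hessDet2_hom hsm hom (by omega) hr.ne' (uu θ)
  have hrp2 : 0 < (r ^ (τ-2))^2 := pow_pos (pow_pos hr _) 2
  exact ⟨hφ, by nlinarith⟩

include hz hbD in
lemma rep_of_weak {p : Fin 2 → ℝ} (hpS : h p = 1 ∧ hessDet2 h p < 0)
    (hw1 : 0 ≤ (uu (sInf (Aset h))) 0 * p 1 - (uu (sInf (Aset h))) 1 * p 0)
    (hw2 : 0 ≤ p 0 * (uu (sSup (Aset h))) 1 - p 1 * (uu (sSup (Aset h))) 0) :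
    ∃ r : ℝ, 0 < r ∧ ∃ θ ∈ Aset h, p = r • uu θ := by
  obtain ⟨hpa, ha0, h0b, hbp⟩ := bounds hτ hsm hom hbD
  have hwidth := width_le_pi hτ hsm hom hbD
  set aa := sInf (Aset h) with haa
  set bb := sSup (Aset h) with hbb
  have hp0 : p ≠ 0 := by
    intro hp
    rw [hp, hz] at hpS
    exact absurd hpS.1 (by norm_num)
  obtain ⟨r, hr, θ, hθI, hrep⟩ := polar_rep p hp0 aa
  have hc1 : (uu aa) 0 * p 1 - (uu aa) 1 * p 0 = r * Real.sin (θ - aa) := by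
    rw [hrep, ← cross_uu aa θ]
    simp only [Pi.smul_apply, smul_eq_mul]
    ring
  have hc2 : p 0 * (uu bb) 1 - p 1 * (uu bb) 0 = r * Real.sin (bb - θ) := by
    rw [hrep, ← cross_uu θ bb]
    simp only [Pi.smul_apply, smul_eq_mul]
    ring
  rw [hc1] at hw1
  rw [hc2] at hw2
  have hs1 : 0 ≤ Real.sin (θ - aa) := by
    by_contra hcon; push_neg at hcon
    nlinarith
  have hs2 : 0 ≤ Real.sin (bb - θ) := by
    by_contra hcon; push_neg at hcon
    nlinarith
  have hθa : θ - aa ≤ Real.pi := by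
    by_contra hcon; push_neg at hcon
    have h2π : θ - aa < 2*Real.pi := by linarith [hθI.2]
    have hneg : Real.sin (θ - aa) < 0 := by
      have hx := Real.sin_pos_of_pos_of_lt_pi (x := θ - aa - Real.pi)
        (by linarith) (by linarith)
      have : Real.sin (θ - aa - Real.pi) = -Real.sin (θ - aa) := by
        rw [Real.sin_sub, Real.cos_pi, Real.sin_pi]; ring
      linarith [hx, this.symm.trans_le (le_refl _)]
    linarith
  have hθb : θ ≤ bb := by
    by_contra hcon; push_neg at hcon
    have hl : -Real.pi ≤ bb - θ := by linarith [hθI.1]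
    rcases eq_or_lt_of_le hl with heq | hlt
    · linarith [hθI.1]
    · have : Real.sin (bb - θ) < 0 := sin_neg_of_neg_of_neg_pi_lt' hlt (by linarith)
      linarith
  have hAIoo := A_eq_Ioo hτ hsm hom hbD
  have hθD : θ ∈ Dset h := angle_mem_D hτ hsm hom hpS.1 hpS.2 hr hrep
  have hend : θ ∈ Set.Ioo aa bb := by
    rcases eq_or_lt_of_le hθI.1 with he1 | hgt
    · exfalso
      have hclo : aa ∈ closure (Aset h) := by
        rw [hAIoo, closure_Ioo (by linarith : aa ≠ bb)]
        exact ⟨le_refl _, by linarith⟩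
      have hmem := closure_A_mem hclo (he1 ▸ hθD)
      rw [hAIoo] at hmem
      exact lt_irrefl aa hmem.1
    rcases eq_or_lt_of_le hθb with he2 | hlt2
    · exfalso
      have hclo : bb ∈ closure (Aset h) := by
        rw [hAIoo, closure_Ioo (by linarith : aa ≠ bb)]
        exact ⟨by linarith, le_refl _⟩
      have hmem := closure_A_mem hclo (he2 ▸ hθD)
      rw [hAIoo] at hmem
      exact lt_irrefl bb hmem.2
    exact ⟨hgt, hlt2⟩
  rw [hAIoo]
  exact ⟨r, hr, θ, hend, hrep⟩

include hbD in
lemma rep_mem_K {r θ : ℝ} (hr : 0 < r) (hθ : θ ∈ Aset h) :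
    0 < (uu (sInf (Aset h))) 0 * (r • uu θ) 1 - (uu (sInf (Aset h))) 1 * (r • uu θ) 0 ∧
    0 < (r • uu θ) 0 * (uu (sSup (Aset h))) 1 - (r • uu θ) 1 * (uu (sSup (Aset h))) 0 := by
  obtain ⟨hpa, ha0, h0b, hbp⟩ := bounds hτ hsm hom hbD
  have hwidth := width_le_pi hτ hsm hom hbD
  set aa := sInf (Aset h) with haa
  set bb := sSup (Aset h) with hbb
  have hAIoo := A_eq_Ioo hτ hsm hom hbD
  rw [hAIoo] at hθ
  have hc1 : (uu aa) 0 * (r • uu θ) 1 - (uu aa) 1 * (r • uu θ) 0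
      = r * Real.sin (θ - aa) := by
    rw [← cross_uu aa θ]
    simp only [Pi.smul_apply, smul_eq_mul]
    ring
  have hc2 : (r • uu θ) 0 * (uu bb) 1 - (r • uu θ) 1 * (uu bb) 0
      = r * Real.sin (bb - θ) := by
    rw [← cross_uu θ bb]
    simp only [Pi.smul_apply, smul_eq_mul]
    ring
  rw [hc1, hc2]
  constructor
  · exact mul_pos hr (Real.sin_pos_of_pos_of_lt_pi (by linarith [hθ.1])
      (by linarith [hθ.2]))
  · exact mul_pos hr (Real.sin_pos_of_pos_of_lt_pi (by linarith [hθ.2])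
      (by linarith [hθ.1]))

include hz hbD in
lemma H_subset (hb1 : h ![1,0] = 1) :
    connectedComponentIn {p : Fin 2 → ℝ | h p = 1 ∧ hessDet2 h p < 0} ![1,0] ⊆
      {p | ∃ r : ℝ, 0 < r ∧ ∃ θ ∈ Aset h, p = r • uu θ} := by
  set S := {p : Fin 2 → ℝ | h p = 1 ∧ hessDet2 h p < 0} with hS
  have hbase : (![1,0] : Fin 2 → ℝ) ∈ S := by
    refine ⟨hb1, ?_⟩
    have := hbD.2
    rwa [uu_zero] at this
  set aa := sInf (Aset h) with haa
  set bb := sSup (Aset h) with hbb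
  set K := {p : Fin 2 → ℝ | 0 < (uu aa) 0 * p 1 - (uu aa) 1 * p 0 ∧
    0 < p 0 * (uu bb) 1 - p 1 * (uu bb) 0} with hK
  have hf1 : Continuous (fun p : Fin 2 → ℝ => (uu aa) 0 * p 1 - (uu aa) 1 * p 0) :=
    (continuous_const.mul (continuous_apply 1)).sub (continuous_const.mul (continuous_apply 0))
  have hf2 : Continuous (fun p : Fin 2 → ℝ => p 0 * (uu bb) 1 - p 1 * (uu bb) 0) :=
    ((continuous_apply 0).mul continuous_const).sub ((continuous_apply 1).mul continuous_const)
  have hKopen : IsOpen K := by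
    rw [hK, Set.setOf_and]
    exact (isOpen_lt continuous_const hf1).inter (isOpen_lt continuous_const hf2)
  have hclK : ∀ p ∈ closure K,
      0 ≤ (uu aa) 0 * p 1 - (uu aa) 1 * p 0 ∧
      0 ≤ p 0 * (uu bb) 1 - p 1 * (uu bb) 0 := by
    intro p hp
    have hsub : closure K ⊆ {p : Fin 2 → ℝ | 0 ≤ (uu aa) 0 * p 1 - (uu aa) 1 * p 0 ∧
        0 ≤ p 0 * (uu bb) 1 - p 1 * (uu bb) 0} := by
      apply closure_minimal
      · intro q hq
        exact ⟨hq.1.le, hq.2.le⟩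
      · rw [Set.setOf_and]
        exact (isClosed_le continuous_const hf1).inter (isClosed_le continuous_const hf2)
    exact hsub hp
  have hSK_rep : ∀ p : Fin 2 → ℝ, p ∈ S → p ∈ closure K →
      ∃ r : ℝ, 0 < r ∧ ∃ θ ∈ Aset h, p = r • uu θ := by
    intro p hpS hpcl
    obtain ⟨hw1, hw2⟩ := hclK p hpcl
    exact rep_of_weak hτ hsm hom hz hbD hpS hw1 hw2
  set V : Set S := Subtype.val ⁻¹' K with hV
  have hVopen : IsOpen V := hKopen.preimage continuous_subtype_val
  have hVclosed : IsClosed V := by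
    apply isClosed_of_closure_subset
    intro x hx
    rw [closure_subtype] at hx
    have hxcl : (x : Fin 2 → ℝ) ∈ closure K := by
      apply closure_mono _ hx
      rintro y ⟨y', hy', rfl⟩
      exact hy'
    obtain ⟨r, hr, θ, hθ, hrep⟩ := hSK_rep x x.2 hxcl
    have hmem := rep_mem_K hτ hsm hom hbD hr hθ
    show (x : Fin 2 → ℝ) ∈ K
    rw [hrep]
    exact hmem
  have hbaseV : (⟨![1,0], hbase⟩ : S) ∈ V := by
    show (![1,0] : Fin 2 → ℝ) ∈ K
    have h0A : (0:ℝ) ∈ Aset h := mem_connectedComponentIn hbD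
    have hmem := rep_mem_K hτ hsm hom hbD one_pos h0A
    rw [one_smul, uu_zero] at hmem
    exact hmem
  intro p hp
  rw [connectedComponentIn_eq_image hbase] at hp
  obtain ⟨p', hp', rfl⟩ := hp
  have hsub := (IsClopen.connectedComponent_subset ⟨hVclosed, hVopen⟩ hbaseV) hp'
  exact hSK_rep p' p'.2 (subset_closure hsub)

end final

end L217

/-- **Nonvanishing of `∂h/∂x` on the cone (Lemma 2.17).**
For `h(x,y) = x^τ − x^{τ−2}y² + Σ_{k=3}^{τ} c_k x^{τ−k} y^k` and `H` the connected
component containing `(1,0)` of the hyperbolic points on `{h = 1}`, the partial derivative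
`∂h/∂x` does not vanish at any point of the cone `ℝ_{>0}·H`. -/
theorem partial_x_nonvanishing_on_cone (τ : ℕ) (hτ : 3 ≤ τ) (c : ℕ → ℝ)
    (h : (Fin 2 → ℝ) → ℝ)
    (hdef : h = fun v => v 0 ^ τ - v 0 ^ (τ - 2) * v 1 ^ 2 +
      ∑ k ∈ Finset.Icc 3 τ, c k * v 0 ^ (τ - k) * v 1 ^ k)
    (H : Set (Fin 2 → ℝ))
    (hH : H = connectedComponentIn {p | h p = 1 ∧ hessDet2 h p < 0} ![1, 0]) :
    ∀ q ∈ {x : Fin 2 → ℝ | ∃ l : ℝ, 0 < l ∧ ∃ p ∈ H, x = l • p},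
      fderiv ℝ h q (Pi.single 0 1) ≠ 0 := by
  have hsm := L217.smooth_h hτ hdef
  have hom := L217.hom_h hτ hdef
  have hb1 := L217.h_base hτ hdef
  have hz := L217.h_zero hτ hdef
  have hdy := L217.dy_base hτ hsm hdef
  have hb : L217.ph h 0 = 1 := by rw [L217.ph, L217.uu_zero]; exact hb1
  have hτ3 : (3:ℝ) ≤ τ := by exact_mod_cast hτ
  have hbD : (0:ℝ) ∈ L217.Dset h := by
    constructor
    · rw [L217.ph, L217.uu_zero, hb1]; norm_num
    · have hph1 : L217.ph1 h 0 = 0 := by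
        rw [L217.ph1, L217.uu_zero, L217.ww_zero]; exact hdy.1
      have hq2 : L217.q2 h 0 = -2 := by
        rw [L217.q2, L217.uu_zero, L217.ww_zero]; exact hdy.2
      have := L217.hess_uu hsm hom hτ 0
      rw [hph1, hq2, hb] at this
      rw [this]
      nlinarith
  intro q hq
  obtain ⟨l, hl, p, hpH, rfl⟩ := hq
  rw [hH] at hpH
  obtain ⟨r, hr, θ, hθA, rfl⟩ := L217.H_subset hτ hsm hom hz hbD hb1 hpH
  have hga := L217.ga_pos hτ hsm hom hb θ hθA
  have e1 : fderiv ℝ h (l • r • L217.uu θ) (Pi.single 0 1)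
      = l ^ (τ-1) * (r ^ (τ-1) * L217.ga h θ) := by
    rw [L217.single0,
      L217.fderiv_hom hsm hom (by omega) hl.ne' (r • L217.uu θ) L217.E0,
      L217.fderiv_hom hsm hom (by omega) hr.ne' (L217.uu θ) L217.E0]
    rfl
  rw [e1]
  have hl1 : 0 < l ^ (τ-1) := pow_pos hl _
  have hr1 : 0 < r ^ (τ-1) := pow_pos hr _
  exact ne_of_gt (mul_pos hl1 (mul_pos hr1 hga))
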